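/- Let A be an irreducible nonnegative real square matrix with spectral radius ρ. If -ρ is an eigenvalue of A, then A is bipartite, i.e., there is a partition of the index set into two parts such that both diagonal blocks of A are zero. -/

import Mathlib

open Matrix Polynomial Filter

attribute [local instance] Matrix.linftyOpNormedAddCommGroup Matrix.linftyOpNormedRing
  Matrix.linftyOpNormedAlgebra

lemma charpoly_eval_eq_det' {n : ℕ} (M : Matrix (Fin n) (Fin n) ℂ) (μ : ℂ) :
    M.charpoly.eval μ = (μ • (1 : Matrix (Fin n) (Fin n) ℂ) - M).det := by
  rw [Matrix.charpoly, _root_.eval_det, Matrix.matPolyEquiv_charmatrix]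
  rw [eval_sub, eval_X, eval_C]
  congr 1
  simp [Matrix.scalar, Matrix.smul_eq_diagonal_mul]

lemma mat_pow_nonneg' {n : ℕ} {A : Matrix (Fin n) (Fin n) ℝ} (h : ∀ i j, 0 ≤ A i j) (m : ℕ) :
    ∀ i j, 0 ≤ (A ^ m) i j := by
  induction m with
  | zero => intro i j; simp [Matrix.one_apply]; positivity
  | succ k ih =>
    intro i j
    rw [pow_succ, Matrix.mul_apply]
    exact Finset.sum_nonneg fun t _ => mul_nonneg (ih i t) (h t j)

lemma mat_pow_diag' {n : ℕ} {A : Matrix (Fin n) (Fin n) ℝ} (h : ∀ i j, 0 ≤ A i j) (m : ℕ)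
    (i : Fin n) (k : ℕ) : ((A ^ m) i i) ^ k ≤ (A ^ (m * k)) i i := by
  induction k with
  | zero => simp [Matrix.one_apply]
  | succ k ih =>
    rw [pow_succ, mul_add, mul_one, pow_add, Matrix.mul_apply]
    calc ((A ^ m) i i) ^ k * (A ^ m) i i ≤ (A ^ (m*k)) i i * (A ^ m) i i :=
          mul_le_mul_of_nonneg_right ih (mat_pow_nonneg' h m i i)
      _ ≤ ∑ t, (A ^ (m*k)) i t * (A ^ m) t i :=
          Finset.single_le_sum
            (fun t _ => mul_nonneg (mat_pow_nonneg' h _ i t) (mat_pow_nonneg' h _ t i))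
            (Finset.mem_univ i)

lemma one_add_pow_ge' {n : ℕ} {A : Matrix (Fin n) (Fin n) ℝ} (h : ∀ i j, 0 ≤ A i j) :
    ∀ k l, l ≤ k → ∀ i j, (A ^ l) i j ≤ ((1 + A) ^ k) i j := by
  have h1 : ∀ i j, 0 ≤ (1 + A : Matrix (Fin n) (Fin n) ℝ) i j := by
    intro i j
    simp only [Matrix.add_apply, Matrix.one_apply]
    split
    · linarith [h i j]
    · simpa using h i j
  intro k
  induction k with
  | zero => intro l hl i j; interval_cases l; exact le_refl _
  | succ k ih =>
    intro l hl i j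
    have hexp : ((1+A)^(k+1)) i j = ((1+A)^k) i j + (((1+A)^k) * A) i j := by
      rw [pow_succ, mul_add, mul_one, Matrix.add_apply]
    rw [hexp]
    match l with
    | 0 =>
      have := ih 0 (Nat.zero_le _) i j
      have h2 : 0 ≤ (((1+A)^k) * A) i j := by
        rw [Matrix.mul_apply]
        exact Finset.sum_nonneg fun t _ => mul_nonneg (mat_pow_nonneg' h1 k i t) (h t j)
      linarith
    | (l+1) =>
      have hl' : l ≤ k := Nat.succ_le_succ_iff.mp hl
      have h3 : (A ^ (l+1)) i j ≤ (((1+A)^k) * A) i j := by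
        rw [pow_succ, Matrix.mul_apply, Matrix.mul_apply]
        exact Finset.sum_le_sum fun t _ => mul_le_mul_of_nonneg_right (ih l hl' i t) (h t j)
      have h4 : 0 ≤ ((1+A)^k) i j := mat_pow_nonneg' h1 k i j
      linarith

lemma terms_nonpos_of_abs_sum' {n : ℕ} (f : Fin n → ℝ) (habs : |∑ j, f j| = ∑ j, |f j|)
    (hneg : ∑ j, f j < 0) : ∀ j, f j ≤ 0 := by
  by_contra hc
  push_neg at hc
  obtain ⟨j0, hj0⟩ := hc
  have h1 : |∑ j, f j| = ∑ j, -f j := by rw [abs_of_neg hneg]; simp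
  have h2 : ∑ j, -f j < ∑ j, |f j| := by
    refine Finset.sum_lt_sum (fun j _ => neg_le_abs (f j)) ⟨j0, Finset.mem_univ _, ?_⟩
    have : |f j0| = f j0 := abs_of_pos hj0
    linarith
  linarith [h1 ▸ habs]

lemma terms_nonneg_of_abs_sum' {n : ℕ} (f : Fin n → ℝ) (habs : |∑ j, f j| = ∑ j, |f j|)
    (hpos : 0 < ∑ j, f j) : ∀ j, 0 ≤ f j := by
  intro j
  have h1 : |∑ j, (-f) j| = ∑ j, |(-f) j| := by
    simp only [Pi.neg_apply, Finset.sum_neg_distrib, abs_neg]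
    exact habs
  have h2 : ∑ j, (-f) j < 0 := by simpa using hpos
  have := terms_nonpos_of_abs_sum' (-f) h1 h2 j
  simpa using this

lemma spectralRadius_le_of_charpoly_roots' {n : ℕ} (AC : Matrix (Fin n) (Fin n) ℂ) (ρ : ℝ)
    (hρ0 : 0 ≤ ρ) (hub : ∀ μ ∈ AC.charpoly.roots, ‖μ‖ ≤ ρ) :
    spectralRadius ℂ AC ≤ ENNReal.ofReal ρ := by
  rw [spectralRadius]
  refine iSup₂_le fun μ hμ => ?_
  rw [spectrum.mem_iff] at hμ
  have hdet : ((algebraMap ℂ (Matrix (Fin n) (Fin n) ℂ)) μ - AC).det = 0 := by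
    by_contra hd
    exact hμ ((Matrix.isUnit_iff_isUnit_det _).mpr (isUnit_iff_ne_zero.mpr hd))
  have heval : AC.charpoly.eval μ = 0 := by
    rw [charpoly_eval_eq_det']
    rw [Algebra.algebraMap_eq_smul_one] at hdet
    exact hdet
  have hmem : μ ∈ AC.charpoly.roots := by
    rw [Polynomial.mem_roots (AC.charpoly_monic.ne_zero)]
    exact heval
  have habs : ‖μ‖ ≤ ρ := hub μ hmem
  have : ‖μ‖ ≤ ρ := habs
  change ‖μ‖ₑ ≤ _
  rw [← ofReal_norm]
  exact ENNReal.ofReal_le_ofReal this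

/-- Let `A` be an irreducible nonnegative real square matrix with spectral radius `ρ`
(the largest modulus among its complex eigenvalues).  If `-ρ` is an eigenvalue of `A`,
then `A` is bipartite. -/
theorem irreducible_nonneg_negSpectralRadius_bipartite (n : ℕ) (hn : 0 < n)
    (A : Matrix (Fin n) (Fin n) ℝ)
    (hnn : ∀ i j, 0 ≤ A i j)
    (hirr : ∀ i j : Fin n, ∃ m : ℕ, 0 < m ∧ 0 < (A ^ m) i j)
    (ρ : ℝ)
    (hρ : IsGreatest
      {t : ℝ | ∃ μ ∈ (A.map (fun a => (a : ℂ))).charpoly.roots, ‖μ‖ = t} ρ)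
    (hneg : (-ρ : ℂ) ∈ (A.map (fun a => (a : ℂ))).charpoly.roots) :
    ∃ U : Finset (Fin n),
      (∀ i ∈ U, ∀ j ∈ U, A i j = 0) ∧ (∀ i ∉ U, ∀ j ∉ U, A i j = 0) := by
  haveI : Nonempty (Fin n) := ⟨⟨0, hn⟩⟩
  have hmapp : ∀ m : ℕ, (A ^ m).map (fun a => (a : ℂ))
      = (A.map (fun a => (a : ℂ))) ^ m := by
    intro m
    induction m with
    | zero =>
      ext i j
      simp [Matrix.map_apply, Matrix.one_apply, apply_ite]
    | succ k ih =>
      ext i j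
      rw [pow_succ, pow_succ, Matrix.map_apply, Matrix.mul_apply, Matrix.mul_apply]
      simp only [Matrix.map_apply, ← ih]
      push_cast
      rfl
  set AC := A.map (fun a => (a : ℂ)) with hACdef
  have hρ0 : 0 ≤ ρ := by
    obtain ⟨μ, _, hμ⟩ := hρ.1
    rw [← hμ]; exact norm_nonneg _
  choose m hmpos hment using hirr
  -- ρ > 0
  have hρpos : 0 < ρ := by
    rcases lt_or_eq_of_le hρ0 with h | h
    · exact h
    exfalso
    have hroots : ∀ μ ∈ AC.charpoly.roots, μ = 0 := by
      intro μ hμ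
      have h2 : ‖μ‖ ≤ ρ := hρ.2 ⟨μ, hμ, rfl⟩
      rw [← h] at h2
      exact norm_eq_zero.mp (le_antisymm h2 (norm_nonneg _))
    have hdeg : AC.charpoly.natDegree = n := by
      rw [Matrix.charpoly_natDegree_eq_dim, Fintype.card_fin]
    have hsplit : AC.charpoly.Splits := IsAlgClosed.splits _
    have hcard : AC.charpoly.roots.card = n := by
      rw [Polynomial.splits_iff_card_roots.mp hsplit, hdeg]
    have hcp : AC.charpoly = Polynomial.X ^ n := by
      have := hsplit.eq_prod_roots_of_monic AC.charpoly_monic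
      rw [this]
      have hrep : (Multiset.map (fun a => Polynomial.X - Polynomial.C a) AC.charpoly.roots)
          = Multiset.replicate n (Polynomial.X : Polynomial ℂ) := by
        rw [Multiset.eq_replicate]
        refine ⟨by rw [Multiset.card_map, hcard], ?_⟩
        intro p hp
        obtain ⟨a, ha, rfl⟩ := Multiset.mem_map.mp hp
        rw [hroots a ha]; simp
      rw [hrep, Multiset.prod_replicate]
    have hCH := Matrix.aeval_self_charpoly AC
    rw [hcp, map_pow, Polynomial.aeval_X] at hCH
    -- A ^ n = 0
    have hAn : A ^ n = 0 := by
      ext i j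
      have := congrFun (congrFun ((hmapp n).trans hCH) i) j
      simp only [Matrix.map_apply, Matrix.zero_apply] at this ⊢
      exact_mod_cast this
    set i0 : Fin n := ⟨0, hn⟩
    have h3 : (0:ℝ) < ((A ^ (m i0 i0)) i0 i0) ^ n := pow_pos (hment i0 i0) n
    have h4 := mat_pow_diag' hnn (m i0 i0) i0 n
    have h5 : A ^ (m i0 i0 * n) = 0 := by
      have hle : n ≤ m i0 i0 * n := Nat.le_mul_of_pos_left n (hmpos i0 i0)
      rw [← Nat.sub_add_cancel hle, pow_add, hAn, mul_zero]
    rw [h5] at h4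
    simp only [Matrix.zero_apply] at h4
    linarith
  -- real eigenvector for -ρ
  have hdetC : ((-ρ : ℂ) • (1 : Matrix (Fin n) (Fin n) ℂ) - AC).det = 0 := by
    have h1 := (Polynomial.mem_roots'.mp hneg).2
    rwa [Polynomial.IsRoot, charpoly_eval_eq_det'] at h1
  have hdetR : ((-ρ : ℝ) • (1 : Matrix (Fin n) (Fin n) ℝ) - A).det = 0 := by
    have hmap : (((-ρ:ℝ) • (1 : Matrix (Fin n) (Fin n) ℝ) - A).map (fun a => (a:ℂ)))
        = ((-ρ:ℂ) • (1 : Matrix (Fin n) (Fin n) ℂ) - AC) := by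
      ext i j
      simp only [Matrix.map_apply, Matrix.sub_apply, Matrix.smul_apply, Matrix.one_apply,
        smul_eq_mul, hACdef, Complex.ofReal_sub, Complex.ofReal_mul, Complex.ofReal_neg]
      split <;> simp
    have h3 : (algebraMap ℝ ℂ) (((-ρ:ℝ) • (1 : Matrix (Fin n) (Fin n) ℝ) - A).det)
        = (((-ρ:ℝ) • (1 : Matrix (Fin n) (Fin n) ℝ) - A).map (fun a => (a:ℂ))).det := by
      rw [RingHom.map_det, RingHom.mapMatrix_apply]
      rfl
    rw [hmap, hdetC] at h3
    have h4 : ((((-ρ:ℝ) • (1 : Matrix (Fin n) (Fin n) ℝ) - A).det : ℝ) : ℂ) = 0 := h3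
    exact_mod_cast h4
  obtain ⟨x, hx0, hxeig⟩ := Matrix.exists_mulVec_eq_zero_iff.mpr hdetR
  have heig : ∀ i, ∑ j, A i j * x j = -(ρ * x i) := by
    intro i
    have h1 := congrFun hxeig i
    rw [Matrix.sub_mulVec, Matrix.smul_mulVec, Matrix.one_mulVec] at h1
    simp only [Pi.sub_apply, Pi.smul_apply, smul_eq_mul, Pi.zero_apply] at h1
    rw [Matrix.mulVec, dotProduct] at h1
    linarith [h1]
  set absx : Fin n → ℝ := fun i => |x i| with habsx
  have h1 : ∀ i, ρ * absx i ≤ ∑ j, A i j * absx j := by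
    intro i
    have h2 : ρ * absx i = |∑ j, A i j * x j| := by
      rw [heig, abs_neg, abs_mul, abs_of_nonneg hρ0]
    rw [h2]
    calc |∑ j, A i j * x j| ≤ ∑ j, |A i j * x j| := Finset.abs_sum_le_sum_abs _ _
      _ = ∑ j, A i j * absx j := by
          refine Finset.sum_congr rfl fun j _ => ?_
          rw [abs_mul, abs_of_nonneg (hnn i j)]
  obtain ⟨j1, hj1⟩ : ∃ j, x j ≠ 0 := Function.ne_iff.mp hx0
  have hj1' : 0 < absx j1 := abs_pos.mpr hj1
  -- the key equality
  have heq : ∀ i, ∑ j, A i j * absx j = ρ * absx i := by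
    by_contra hne
    push_neg at hne
    obtain ⟨i1, hi1⟩ := hne
    have hstricti1 : ρ * absx i1 < ∑ j, A i1 j * absx j := lt_of_le_of_ne (h1 i1) (Ne.symm hi1)
    set N := Finset.univ.sup fun i => Finset.univ.sup fun j => m i j with hN
    have hNle : ∀ i j, m i j ≤ N :=
      fun i j => le_trans (Finset.le_sup (Finset.mem_univ j))
        (Finset.le_sup (f := fun i => Finset.univ.sup fun j => m i j) (Finset.mem_univ i))
    set B := (1 + A) ^ N with hB
    have hBpos : ∀ i j, 0 < B i j :=
      fun i j => lt_of_lt_of_le (hment i j) (one_add_pow_ge' hnn N (m i j) (hNle i j) i j)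
    set z : Fin n → ℝ := B *ᵥ absx with hz
    have hzval : ∀ i, z i = ∑ j, B i j * absx j := by
      intro i; rw [hz, Matrix.mulVec, dotProduct]
    have hzpos : ∀ i, 0 < z i := by
      intro i
      rw [hzval]
      have : B i j1 * absx j1 ≤ ∑ j, B i j * absx j :=
        Finset.single_le_sum
          (fun j _ => mul_nonneg (hBpos i j).le (abs_nonneg _)) (Finset.mem_univ j1)
      nlinarith [hBpos i j1]
    set w : Fin n → ℝ := fun i => (∑ j, A i j * absx j) - ρ * absx i with hw
    have hw0 : ∀ i, 0 ≤ w i := fun i => by simp only [hw]; linarith [h1 i]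
    have hw1 : 0 < w i1 := by simp only [hw]; linarith
    have hBw : ∀ i, 0 < (B *ᵥ w) i := by
      intro i
      rw [Matrix.mulVec, dotProduct]
      have h2 : B i i1 * w i1 ≤ ∑ j, B i j * w j :=
        Finset.single_le_sum (fun j _ => mul_nonneg (hBpos i j).le (hw0 j)) (Finset.mem_univ i1)
      nlinarith [hBpos i i1]
    have hcomm : A * B = B * A :=
      (Commute.pow_right ((Commute.one_right A).add_right (Commute.refl A)) N)
    have hAabsx : A *ᵥ absx = ρ • absx + w := by
      funext i
      simp only [Pi.add_apply, Pi.smul_apply, smul_eq_mul, hw]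
      rw [Matrix.mulVec, dotProduct]
      ring
    have hAz : A *ᵥ z = ρ • z + B *ᵥ w := by
      rw [hz, Matrix.mulVec_mulVec, hcomm, ← Matrix.mulVec_mulVec, hAabsx,
        Matrix.mulVec_add, Matrix.mulVec_smul]
    set ε := Finset.univ.inf' Finset.univ_nonempty (fun i => (B *ᵥ w) i / z i) with hε
    have hεpos : 0 < ε :=
      (Finset.lt_inf'_iff Finset.univ_nonempty).mpr fun i _ => div_pos (hBw i) (hzpos i)
    have hεz : ∀ i, ε * z i ≤ (B *ᵥ w) i := by
      intro i
      have h2 : ε ≤ (B *ᵥ w) i / z i := Finset.inf'_le _ (Finset.mem_univ i)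
      exact (le_div_iff₀ (hzpos i)).mp h2
    have hstep : ∀ i, (ρ + ε) * z i ≤ (A *ᵥ z) i := by
      intro i
      have h2 := congrFun hAz i
      simp only [Pi.add_apply, Pi.smul_apply, smul_eq_mul] at h2
      rw [h2]
      have := hεz i
      ring_nf
      nlinarith [hεz i]
    have hρε : 0 < ρ + ε := by linarith
    have hpow : ∀ k i, (ρ + ε) ^ k * z i ≤ ((A ^ k) *ᵥ z) i := by
      intro k
      induction k with
      | zero => intro i; simp [Matrix.one_mulVec]
      | succ k ih =>
        intro i
        rw [pow_succ' A k, ← Matrix.mulVec_mulVec]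

        have h2 : ∀ u v : Fin n → ℝ, (∀ j, u j ≤ v j) → (A *ᵥ u) i ≤ (A *ᵥ v) i := by
          intro u v huv
          rw [Matrix.mulVec, Matrix.mulVec, dotProduct, dotProduct]
          exact Finset.sum_le_sum fun j _ => mul_le_mul_of_nonneg_left (huv j) (hnn i j)
        have h3 : (A *ᵥ ((ρ+ε)^k • z)) i ≤ (A *ᵥ ((A ^ k) *ᵥ z)) i := by
          apply h2
          intro j
          simp only [Pi.smul_apply, smul_eq_mul]
          exact ih j
        have h4 : (A *ᵥ ((ρ+ε)^k • z)) i = (ρ+ε)^k * (A *ᵥ z) i := by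
          rw [Matrix.mulVec_smul]; simp
        have h5 : (ρ+ε)^k * ((ρ+ε) * z i) ≤ (ρ+ε)^k * (A *ᵥ z) i :=
          mul_le_mul_of_nonneg_left (hstep i) (pow_nonneg hρε.le k)
        calc (ρ+ε)^(k+1) * z i = (ρ+ε)^k * ((ρ+ε) * z i) := by ring
          _ ≤ (ρ+ε)^k * (A *ᵥ z) i := h5
          _ = (A *ᵥ ((ρ+ε)^k • z)) i := h4.symm
          _ ≤ (A *ᵥ ((A ^ k) *ᵥ z)) i := h3
    set i0 : Fin n := ⟨0, hn⟩
    set Zmax := Finset.univ.sup' Finset.univ_nonempty z with hZmax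
    have hZpos : 0 < Zmax := lt_of_lt_of_le (hzpos i0) (Finset.le_sup' z (Finset.mem_univ i0))
    -- entrywise bound by the operator norm
    have hub : ∀ k : ℕ, (ρ + ε) ^ k * z i0 ≤ ‖AC ^ k‖ * Zmax := by
      intro k
      have h2 : ((A ^ k) *ᵥ z) i0 ≤ (∑ j, (A ^ k) i0 j) * Zmax := by
        rw [Matrix.mulVec, dotProduct, Finset.sum_mul]
        refine Finset.sum_le_sum fun j _ => ?_
        exact mul_le_mul_of_nonneg_left (Finset.le_sup' z (Finset.mem_univ j))
          (mat_pow_nonneg' hnn k i0 j)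
      have h3 : ∑ j, (A ^ k) i0 j ≤ ‖AC ^ k‖ := by
        rw [Matrix.linfty_opNorm_def]
        have h4 : ∑ j, (A ^ k) i0 j = ((∑ j, ‖(AC ^ k) i0 j‖₊ : NNReal) : ℝ) := by
          push_cast
          refine Finset.sum_congr rfl fun j _ => ?_
          rw [← hmapp k]
          simp only [Matrix.map_apply, coe_nnnorm, Complex.norm_real, Real.norm_eq_abs]
          rw [abs_of_nonneg (mat_pow_nonneg' hnn k i0 j)]
        rw [h4, NNReal.coe_le_coe]
        exact Finset.le_sup (f := fun i => ∑ j, ‖(AC ^ k) i j‖₊) (Finset.mem_univ i0)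
      calc (ρ + ε) ^ k * z i0 ≤ ((A ^ k) *ᵥ z) i0 := hpow k i0
        _ ≤ (∑ j, (A ^ k) i0 j) * Zmax := h2
        _ ≤ ‖AC ^ k‖ * Zmax := mul_le_mul_of_nonneg_right h3 hZpos.le
    -- Gelfand's formula
    haveI : CompleteSpace (Matrix (Fin n) (Fin n) ℂ) := FiniteDimensional.complete ℂ _
    have hsr : spectralRadius ℂ AC ≤ ENNReal.ofReal ρ := by
      apply spectralRadius_le_of_charpoly_roots' AC ρ hρ0
      intro μ hμ
      exact hρ.2 ⟨μ, hμ, rfl⟩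
    have htend := spectrum.pow_norm_pow_one_div_tendsto_nhds_spectralRadius AC
    have hlt : spectralRadius ℂ AC < ENNReal.ofReal (ρ + ε/2) := by
      refine lt_of_le_of_lt hsr ?_
      rw [ENNReal.ofReal_lt_ofReal_iff (by linarith)]
      linarith
    have hev1 : ∀ᶠ k : ℕ in atTop, ENNReal.ofReal (‖AC ^ k‖ ^ (1/(k:ℝ))) <
        ENNReal.ofReal (ρ + ε/2) := htend.eventually_lt_const hlt
    set r := (ρ + ε/2) / (ρ + ε) with hr
    have hrlt : r < 1 := by rw [hr, div_lt_one hρε]; linarith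
    have hr0 : 0 ≤ r := div_nonneg (by linarith) hρε.le
    set c := z i0 / Zmax with hc
    have hcpos : 0 < c := div_pos (hzpos i0) hZpos
    have hev2 : ∀ᶠ k : ℕ in atTop, r ^ k < c :=
      (tendsto_pow_atTop_nhds_zero_of_lt_one hr0 hrlt).eventually_lt_const hcpos
    obtain ⟨k, ⟨hk1, hk2⟩, hk3⟩ := ((hev1.and hev2).and (eventually_ge_atTop 1)).exists
    -- from hk1 : ofReal ... < ofReal ..., get the real inequality
    have hnorm_lt : ‖AC ^ k‖ ^ (1/(k:ℝ)) < ρ + ε/2 :=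
      (ENNReal.ofReal_lt_ofReal_iff (by linarith)).mp hk1
    have hkne : (k:ℝ) ≠ 0 := by positivity
    have hnormk : ‖AC ^ k‖ < (ρ + ε/2) ^ k := by
      have h2 : (‖AC ^ k‖ ^ (1/(k:ℝ))) ^ k < (ρ + ε/2) ^ k :=
        pow_lt_pow_left₀ hnorm_lt (Real.rpow_nonneg (norm_nonneg _) _) (by omega)
      calc ‖AC ^ k‖ = (‖AC ^ k‖ ^ (1/(k:ℝ))) ^ k := by
            rw [← Real.rpow_natCast (‖AC ^ k‖ ^ (1/(k:ℝ))) k, ← Real.rpow_mul (norm_nonneg _),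
              one_div_mul_cancel hkne, Real.rpow_one]
        _ < (ρ + ε/2) ^ k := h2
    have hfinal : (ρ + ε) ^ k * z i0 < (ρ + ε) ^ k * z i0 := by
      have hrmul : r * (ρ + ε) = ρ + ε/2 := div_mul_cancel₀ _ hρε.ne'
      calc (ρ + ε) ^ k * z i0 ≤ ‖AC ^ k‖ * Zmax := hub k
        _ < (ρ + ε/2) ^ k * Zmax := mul_lt_mul_of_pos_right hnormk hZpos
        _ = r ^ k * (ρ + ε) ^ k * Zmax := by rw [← mul_pow, hrmul]
        _ < c * (ρ + ε) ^ k * Zmax :=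
            mul_lt_mul_of_pos_right (mul_lt_mul_of_pos_right hk2 (pow_pos hρε k)) hZpos
        _ = (ρ + ε) ^ k * z i0 := by
            rw [hc]; field_simp
    exact lt_irrefl _ hfinal
  -- positivity of |x|
  have hpowe : ∀ k i, ∑ j, (A ^ k) i j * absx j = ρ ^ k * absx i := by
    intro k
    induction k with
    | zero => intro i; simp [Matrix.one_apply, Finset.sum_ite_eq]
    | succ k ih =>
      intro i
      have h2 : ∑ j, (A ^ (k+1)) i j * absx j = ∑ j, A i j * (∑ t, (A ^ k) j t * absx t) := by
        calc ∑ j, (A ^ (k+1)) i j * absx j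
            = ∑ j, (∑ t, A i t * (A ^ k) t j) * absx j := by
              refine Finset.sum_congr rfl fun j _ => ?_
              rw [pow_succ' A k, Matrix.mul_apply]
          _ = ∑ j, ∑ t, A i t * ((A ^ k) t j * absx j) := by
              refine Finset.sum_congr rfl fun j _ => ?_
              rw [Finset.sum_mul]
              exact Finset.sum_congr rfl fun t _ => by ring
          _ = ∑ t, ∑ j, A i t * ((A ^ k) t j * absx j) := Finset.sum_comm
          _ = ∑ t, A i t * (∑ j, (A ^ k) t j * absx j) := by
              refine Finset.sum_congr rfl fun t _ => ?_
              rw [Finset.mul_sum]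
      rw [h2]
      calc ∑ j, A i j * (∑ t, (A ^ k) j t * absx t) = ∑ j, A i j * (ρ ^ k * absx j) := by
            refine Finset.sum_congr rfl fun j _ => by rw [ih j]
        _ = ρ ^ k * ∑ j, A i j * absx j := by rw [Finset.mul_sum]; exact Finset.sum_congr rfl fun j _ => by ring
        _ = ρ ^ (k+1) * absx i := by rw [heq i]; ring
  have habspos : ∀ i, 0 < absx i := by
    intro i
    have h2 := hpowe (m i j1) i
    have h3 : (A ^ (m i j1)) i j1 * absx j1 ≤ ∑ j, (A ^ (m i j1)) i j * absx j :=
      Finset.single_le_sum (f := fun j => (A ^ (m i j1)) i j * absx j)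
        (fun j _ => mul_nonneg (mat_pow_nonneg' hnn _ i j) (abs_nonneg _))
        (Finset.mem_univ j1)
    rw [h2] at h3
    have h4 : 0 < (A ^ (m i j1)) i j1 * absx j1 := mul_pos (hment i j1) hj1'
    have h5 : 0 < ρ ^ (m i j1) := pow_pos hρpos _
    nlinarith
  -- triangle equality per row
  have htri : ∀ i, |∑ j, A i j * x j| = ∑ j, |A i j * x j| := by
    intro i
    rw [heig i, abs_neg, abs_mul, abs_of_nonneg hρ0]
    rw [show (∑ j, |A i j * x j|) = ∑ j, A i j * absx j from
      Finset.sum_congr rfl fun j _ => by rw [abs_mul, abs_of_nonneg (hnn i j)]]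
    rw [heq i]
  -- the bipartition
  refine ⟨Finset.univ.filter (fun i => 0 < x i), ?_, ?_⟩
  · intro i hi j hj
    rw [Finset.mem_filter] at hi hj
    have hxi : 0 < x i := hi.2
    have hxj : 0 < x j := hj.2
    have hsum : ∑ t, A i t * x t < 0 := by
      rw [heig i]; nlinarith
    have h2 := terms_nonpos_of_abs_sum' (fun t => A i t * x t) (htri i) hsum j
    by_contra hAij
    have h3 : 0 < A i j := lt_of_le_of_ne (hnn i j) (Ne.symm hAij)
    nlinarith
  · intro i hi j hj
    rw [Finset.mem_filter] at hi hj
    have hxi : x i < 0 := by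
      have := habspos i
      rcases lt_trichotomy (x i) 0 with h | h | h
      · exact h
      · rw [habsx] at this; simp [h] at this
      · exact absurd ⟨Finset.mem_univ i, h⟩ hi
    have hxj : x j < 0 := by
      have := habspos j
      rcases lt_trichotomy (x j) 0 with h | h | h
      · exact h
      · rw [habsx] at this; simp [h] at this
      · exact absurd ⟨Finset.mem_univ j, h⟩ hj
    have hsum : 0 < ∑ t, A i t * x t := by
      rw [heig i]; nlinarith
    have h2 := terms_nonneg_of_abs_sum' (fun t => A i t * x t) (htri i) hsum j
    by_contra hAij
    have h3 : 0 < A i j := lt_of_le_of_ne (hnn i j) (Ne.symm hAij)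
    nlinarith
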